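/- Let f : ℝ^n → ℝ be differentiable with gradient ∇f, let 0 < μ ≤ L, let 0 ≤ α < 1, δ ≥ 0, and let g̃ satisfy the composite noise condition with parameters α, δ. Then for every γ ≥ 0 and every x: ‖g̃(x)‖² ≥ (1 − (1/4)(μ/(2L))^γ)·(1−α)²·‖∇f(x)‖² − (4·(2L/μ)^γ − 1)·δ², and ‖g̃(x)‖² ≤ (1 + (1/4)(μ/(2L))^γ)·(1+α)²·‖∇f(x)‖² + (4·(2L/μ)^γ + 1)·δ². -/
import Mathlib


open scoped InnerProductSpace

private lemma aux_key (p q a d : ℝ) (hp : 0 < p) (hpq : p * q = 1)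
    (ha : 0 ≤ a) (hd : 0 ≤ d) : 2 * (a * d) ≤ 1 / 4 * p * a ^ 2 + 4 * (q * d ^ 2) := by
  have h5 : 0 ≤ p * (p * a ^ 2 - 8 * (a * d) + 16 * (q * d ^ 2)) := by
    have h := sq_nonneg (p * a - 4 * d)
    have h16 : p * (q * d ^ 2) = d ^ 2 := by rw [← mul_assoc, hpq, one_mul]
    nlinarith [h, h16]
  have h6 : 0 ≤ p * a ^ 2 - 8 * (a * d) + 16 * (q * d ^ 2) := by nlinarith [h5, hp]
  linarith

private lemma aux_low (p q a d G : ℝ) (hp : 0 < p) (hp1 : p ≤ 1) (hq1 : 1 ≤ q)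
    (hpq : p * q = 1) (ha : 0 ≤ a) (hd : 0 ≤ d) (hG : 0 ≤ G) (h : a - d ≤ G) :
    (1 - 1 / 4 * p) * a ^ 2 - (4 * q - 1) * d ^ 2 ≤ G ^ 2 := by
  have key := aux_key p q a d hp hpq ha hd
  rcases le_or_gt a d with hcase | hcase
  · have h2 : a ^ 2 ≤ d ^ 2 := by nlinarith
    nlinarith [sq_nonneg G, sq_nonneg a, sq_nonneg d]
  · have h2 : (a - d) ^ 2 ≤ G ^ 2 := by nlinarith
    nlinarith

private lemma aux_up (p q a d G : ℝ) (hp : 0 < p) (hpq : p * q = 1)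
    (ha : 0 ≤ a) (hd : 0 ≤ d) (hG : 0 ≤ G) (h : G ≤ a + d) :
    G ^ 2 ≤ (1 + 1 / 4 * p) * a ^ 2 + (4 * q + 1) * d ^ 2 := by
  have key := aux_key p q a d hp hpq ha hd
  have h1 : G ^ 2 ≤ (a + d) ^ 2 := by nlinarith
  nlinarith

/-- Two-sided bounds on the squared norm of a composite-noise gradient estimate,
parameterized by an exponent γ. -/
theorem noised_grad_norm_bounds {n : ℕ} (f : EuclideanSpace ℝ (Fin n) → ℝ)
    (f' g : EuclideanSpace ℝ (Fin n) → EuclideanSpace ℝ (Fin n))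
    (hgrad : ∀ x, HasGradientAt f (f' x) x)
    (μ L : ℝ) (hμ : 0 < μ) (hμL : μ ≤ L)
    (α δ : ℝ) (hα0 : 0 ≤ α) (hα1 : α < 1) (hδ : 0 ≤ δ)
    (hnoise : ∀ x, ‖g x - f' x‖ ≤ α * ‖f' x‖ + δ) :
    ∀ γ : ℝ, 0 ≤ γ → ∀ x : EuclideanSpace ℝ (Fin n),
      (1 - (1 / 4) * (μ / (2 * L)) ^ γ) * (1 - α) ^ 2 * ‖f' x‖ ^ 2
          - (4 * (2 * L / μ) ^ γ - 1) * δ ^ 2 ≤ ‖g x‖ ^ 2 ∧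
      ‖g x‖ ^ 2 ≤ (1 + (1 / 4) * (μ / (2 * L)) ^ γ) * (1 + α) ^ 2 * ‖f' x‖ ^ 2
          + (4 * (2 * L / μ) ^ γ + 1) * δ ^ 2 := by
  intro γ hγ x
  have hL : 0 < L := lt_of_lt_of_le hμ hμL
  have hb1 : (0:ℝ) < μ / (2 * L) := by positivity
  have hb2 : (0:ℝ) < 2 * L / μ := by positivity
  have hp : 0 < (μ / (2 * L)) ^ γ := Real.rpow_pos_of_pos hb1 γ
  have hq : 0 < (2 * L / μ) ^ γ := Real.rpow_pos_of_pos hb2 γ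
  have hpq : (μ / (2 * L)) ^ γ * (2 * L / μ) ^ γ = 1 := by
    rw [← Real.mul_rpow hb1.le hb2.le]
    have : μ / (2 * L) * (2 * L / μ) = 1 := by field_simp
    rw [this, Real.one_rpow]
  have hp1 : (μ / (2 * L)) ^ γ ≤ 1 := by
    apply Real.rpow_le_one hb1.le _ hγ
    rw [div_le_one (by linarith)]
    linarith
  have hq1 : 1 ≤ (2 * L / μ) ^ γ := by nlinarith [hpq, hp, hq]
  have hN0 : (0:ℝ) ≤ ‖f' x‖ := norm_nonneg _
  have hG0 : (0:ℝ) ≤ ‖g x‖ := norm_nonneg _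
  have hnx := hnoise x
  have hup : ‖g x‖ ≤ (1 + α) * ‖f' x‖ + δ := by
    have h1 : ‖g x‖ ≤ ‖f' x‖ + ‖g x - f' x‖ := by
      calc ‖g x‖ = ‖f' x + (g x - f' x)‖ := by rw [add_sub_cancel]
        _ ≤ ‖f' x‖ + ‖g x - f' x‖ := norm_add_le _ _
    linarith
  have hlo : (1 - α) * ‖f' x‖ - δ ≤ ‖g x‖ := by
    have h1 : ‖f' x‖ - ‖g x‖ ≤ ‖g x - f' x‖ := by
      have := norm_sub_norm_le (f' x) (g x)
      rw [norm_sub_rev] at this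
      exact this
    linarith
  constructor
  · have := aux_low ((μ / (2 * L)) ^ γ) ((2 * L / μ) ^ γ) ((1 - α) * ‖f' x‖) δ ‖g x‖
      hp hp1 hq1 hpq (mul_nonneg (by linarith) hN0) hδ hG0 hlo
    nlinarith [this]
  · have := aux_up ((μ / (2 * L)) ^ γ) ((2 * L / μ) ^ γ) ((1 + α) * ‖f' x‖) δ ‖g x‖
      hp hpq (mul_nonneg (by linarith) hN0) hδ hG0 hup
    nlinarith [this]
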